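/- Key step in the proof that supersymmetric increments between x-points preserve non-emptiness of bow varieties (preservation of condition (S2)): Let W and V be finite-dimensional complex vector spaces, A : W → V and f : W → ℂ linear maps, B an endomorphism of V, v₀ ∈ V a vector, and c ∈ ℂ such that B − c·id_V is invertible. Define A' : W → V ⊕ ℂ by A'(y) = (A(y), f(y)), the endomorphism B'(x,λ) = (B(x), c·λ) of V ⊕ ℂ, and the vector v₀' = (v₀, 1) ∈ V ⊕ ℂ. If the only B-invariant subspace of V containing Im A + ℂ·v₀ is V itself, then the only B'-invariant subspace of V ⊕ ℂ containing Im A' + ℂ·v₀' is V ⊕ ℂ itself. -/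
import Mathlib


/-- **Preservation of condition (S2) under supersymmetric increments between x-points.**
Let `W`, `V` be finite-dimensional complex vector spaces, `A : W → V`, `f : W → ℂ` linear,
`B` an endomorphism of `V`, `v₀ ∈ V`, and `c ∈ ℂ` with `B - c·id` invertible.  Define
`A' : W → V ⊕ ℂ` by `A' y = (A y, f y)`, the endomorphism `B' (x, l) = (B x, c * l)` of
`V ⊕ ℂ`, and `v₀' = (v₀, 1)`.  If the only `B`-invariant subspace of `V` containing
`Im A + ℂ·v₀` is `V`, then the only `B'`-invariant subspace of `V ⊕ ℂ` containing
`Im A' + ℂ·v₀'` is `V ⊕ ℂ`. -/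
theorem condition_S2_preserved
    {W V : Type*} [AddCommGroup W] [Module ℂ W] [FiniteDimensional ℂ W]
    [AddCommGroup V] [Module ℂ V] [FiniteDimensional ℂ V]
    (A : W →ₗ[ℂ] V) (f : W →ₗ[ℂ] ℂ) (B : V →ₗ[ℂ] V) (v₀ : V) (c : ℂ)
    (hBc : Function.Bijective (B - c • (LinearMap.id : V →ₗ[ℂ] V)))
    (A' : W →ₗ[ℂ] V × ℂ) (hA' : ∀ y : W, A' y = (A y, f y))
    (B' : V × ℂ →ₗ[ℂ] V × ℂ) (hB' : ∀ (x : V) (l : ℂ), B' (x, l) = (B x, c * l))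
    (hS2 : ∀ T : Submodule ℂ V, (∀ x ∈ T, B x ∈ T) →
      LinearMap.range A ≤ T → v₀ ∈ T → T = ⊤) :
    ∀ T : Submodule ℂ (V × ℂ), (∀ z ∈ T, B' z ∈ T) →
      LinearMap.range A' ≤ T → ((v₀, (1 : ℂ)) ∈ T) → T = ⊤ := by
  intro T hTinv hTA hTv
  set D : V →ₗ[ℂ] V := B - c • (LinearMap.id : V →ₗ[ℂ] V) with hD
  -- T₀ = { x | (x, 0) ∈ T }
  set T₀ : Submodule ℂ V := Submodule.comap (LinearMap.inl ℂ V ℂ) T with hT₀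
  have memT₀ : ∀ x : V, x ∈ T₀ ↔ ((x, (0:ℂ)) ∈ T) := by
    intro x; rfl
  -- T₀ is B-invariant
  have hT₀inv : ∀ x ∈ T₀, B x ∈ T₀ := by
    intro x hx
    rw [memT₀] at hx ⊢
    have := hTinv _ hx
    rwa [hB' x 0, mul_zero] at this
  have hDcomm : ∀ x : V, D (B x) = B (D x) := by
    intro x
    simp [hD, LinearMap.sub_apply, LinearMap.smul_apply, map_smul, map_sub]
  have hT₀D : ∀ x ∈ T₀, D x ∈ T₀ := by
    intro x hx
    have := hT₀inv x hx
    have h2 : (c • x) ∈ T₀ := T₀.smul_mem c hx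
    simpa [hD, LinearMap.sub_apply] using T₀.sub_mem this h2
  -- (B - c) v₀ ∈ T₀
  have hv₀D : D v₀ ∈ T₀ := by
    rw [memT₀]
    have h1 := hTinv _ hTv
    rw [hB' v₀ 1, mul_one] at h1
    have h2 : (c • ((v₀, (1:ℂ)) : V × ℂ)) ∈ T := T.smul_mem c hTv
    have := T.sub_mem h1 h2
    simpa [hD, Prod.smul_mk, Prod.mk_sub_mk, smul_eq_mul] using this
  -- A y - f y • v₀ ∈ T₀
  have hAy : ∀ y : W, (A y - f y • v₀) ∈ T₀ := by
    intro y
    rw [memT₀]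
    have h1 : A' y ∈ T := hTA ⟨y, rfl⟩
    rw [hA' y] at h1
    have h2 : (f y • ((v₀, (1:ℂ)) : V × ℂ)) ∈ T := T.smul_mem (f y) hTv
    have := T.sub_mem h1 h2
    simpa [Prod.smul_mk, Prod.mk_sub_mk, smul_eq_mul] using this
  -- U = D⁻¹ T₀
  set U : Submodule ℂ V := Submodule.comap D T₀ with hU
  have hUtop : U = ⊤ := by
    apply hS2
    · intro x hx
      have : D x ∈ T₀ := hx
      show D (B x) ∈ T₀
      rw [hDcomm]
      exact hT₀inv _ this
    · rintro _ ⟨y, rfl⟩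
      show D (A y) ∈ T₀
      have h1 : D (A y - f y • v₀) ∈ T₀ := hT₀D _ (hAy y)
      have h2 : D (f y • v₀) ∈ T₀ := by
        rw [map_smul]; exact T₀.smul_mem _ hv₀D
      have := T₀.add_mem h1 h2
      rwa [← map_add, sub_add_cancel] at this
    · exact hv₀D
  have hT₀top : T₀ = ⊤ := by
    rw [eq_top_iff]
    intro x _
    obtain ⟨y, hy⟩ := hBc.2 x
    have : y ∈ U := hUtop ▸ Submodule.mem_top
    rw [hU, Submodule.mem_comap] at this
    rwa [hy] at this
  -- conclude
  rw [eq_top_iff]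
  rintro ⟨x, l⟩ _
  have hx0 : ((x, (0:ℂ)) : V × ℂ) ∈ T := by
    rw [← memT₀, hT₀top]; trivial
  have hv0 : ((v₀, (0:ℂ)) : V × ℂ) ∈ T := by
    rw [← memT₀, hT₀top]; trivial
  have h01 : ((0, (1:ℂ)) : V × ℂ) ∈ T := by
    have := T.sub_mem hTv hv0
    simpa using this
  have h0l : ((0, l) : V × ℂ) ∈ T := by
    have := T.smul_mem l h01
    simpa [Prod.smul_mk, smul_eq_mul] using this
  have := T.add_mem hx0 h0l
  simpa using this
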